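/- Let Γ be an E-complete maximally tableau FOLP_CS-consistent set of closed Par-formulas, and define the canonical model M = (D, I, E) with respect to Γ and CS by: D = Par; I(Q) = { (u₁,…,uₙ) : Q(u₁,…,uₙ) ∈ Γ } for each n-place predicate symbol Q; and E(t) = { A : ¬t:_{Par(A)} A ∉ Γ }. Then M is a Mkrtychev model of FOLP_CS, i.e., E satisfies all of conditions E1–E6. -/

import Mathlib

open scoped Classical

/-- Justification terms of FOLP, built from justification variables `jvar i`,
justification constants `jconst i`, and the operations `+`, `·`, `!`, `genₓ`. -/
inductive Tm : Type
  | jvar : ℕ → Tm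
  | jconst : ℕ → Tm
  | plus : Tm → Tm → Tm
  | app : Tm → Tm → Tm
  | bang : Tm → Tm
  | gen : ℕ → Tm → Tm
  deriving DecidableEq

/-- FOLP formulas with extra individual constants from `K` (`K`-formulas).
Individual variables are natural numbers; an argument `Sum.inl x` is an individual
variable, `Sum.inr a` is an element of `K`.  Predicate symbols are indexed by `ℕ`.
Plain FOLP formulas are `Fm Empty`, Par-formulas are `Fm ℕ` (the parameters being a
separate copy of ℕ, namely the `Sum.inr` part), and `D`-formulas are `Fm D`.
`just t X A` is the justification assertion `t :_X A`. -/
inductive Fm (K : Type) : Type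
  | pred : ℕ → List (ℕ ⊕ K) → Fm K
  | neg : Fm K → Fm K
  | imp : Fm K → Fm K → Fm K
  | all : ℕ → Fm K → Fm K
  | ex : ℕ → Fm K → Fm K
  | just : Tm → Finset (ℕ ⊕ K) → Fm K → Fm K

namespace Fm

variable {K K' : Type}

/-- Free individual variables of a `K`-formula.  Recall that
`FVar (t :_X A) = X` (more precisely, the individual-variable part of `X`). -/
noncomputable def fvar : Fm K → Finset ℕ
  | pred _ args => (args.filterMap Sum.getLeft?).toFinset
  | neg A => A.fvar
  | imp A B => A.fvar ∪ B.fvar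
  | all x A => A.fvar.erase x
  | ex x A => A.fvar.erase x
  | just _ X _ => (X.toList.filterMap Sum.getLeft?).toFinset

/-- The elements of `K` occurring in a `K`-formula (for `K = Par` this is `Par(A)`,
for `K = D` this is `D(A)`). -/
noncomputable def kocc : Fm K → Finset K
  | pred _ args => (args.filterMap Sum.getRight?).toFinset
  | neg A => A.kocc
  | imp A B => A.kocc ∪ B.kocc
  | all _ A => A.kocc
  | ex _ A => A.kocc
  | just _ X A => A.kocc ∪ (X.toList.filterMap Sum.getRight?).toFinset

/-- A `K`-formula is closed if it contains no free occurrences of individual variables. -/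
def Closed (A : Fm K) : Prop := A.fvar = ∅

/-- Action of a partial substitution (of elements of `K` for individual variables)
on variables/`K`-elements. -/
def subK (σ : ℕ → Option K) : ℕ ⊕ K → ℕ ⊕ K
  | .inl x => (σ x).elim (.inl x) .inr
  | .inr a => .inr a

/-- Simultaneous substitution of elements of `K` for free individual variables.
In `t :_X A` only the variables belonging to `X` are free, so only those get
substituted (both inside `X` and inside `A`). -/
noncomputable def msubst (σ : ℕ → Option K) : Fm K → Fm K
  | pred Q args => pred Q (args.map (subK σ))
  | neg A => neg (A.msubst σ)
  | imp A B => imp (A.msubst σ) (B.msubst σ)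
  | all x A => all x (A.msubst fun y => if y = x then none else σ y)
  | ex x A => ex x (A.msubst fun y => if y = x then none else σ y)
  | just t X A =>
      just t (X.image (subK σ)) (A.msubst fun y => if Sum.inl y ∈ X then σ y else none)

/-- `A.subst1 x a` is `A(a)`, i.e. `A{x/a}`: the result of replacing all free
occurrences of the individual variable `x` by the element `a : K`. -/
noncomputable def subst1 (x : ℕ) (a : K) (A : Fm K) : Fm K :=
  A.msubst fun y => if y = x then some a else none

/-- Action of a variable-for-variable substitution on arguments. -/
def subVV (x y : ℕ) : ℕ ⊕ K → ℕ ⊕ K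
  | .inl z => if z = x then .inl y else .inl z
  | .inr a => .inr a

/-- `A.vsubst x y` is `A{x/y}`: substitution of the individual variable `y` for
the free occurrences of the individual variable `x`. -/
noncomputable def vsubst (x y : ℕ) : Fm K → Fm K
  | pred Q args => pred Q (args.map (subVV x y))
  | neg A => neg (A.vsubst x y)
  | imp A B => imp (A.vsubst x y) (B.vsubst x y)
  | all z A => if z = x then all z A else all z (A.vsubst x y)
  | ex z A => if z = x then ex z A else ex z (A.vsubst x y)
  | just t X A =>
      if Sum.inl x ∈ X then just t (X.image (subVV x y)) (A.vsubst x y) else just t X A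

/-- `FreeFor y x A`: the variable `y` is substitutable for the variable `x` in `A`
(no free occurrence of `x` lies in the scope of a quantifier binding `y`). -/
def FreeFor (y x : ℕ) : Fm K → Prop
  | pred _ _ => True
  | neg A => FreeFor y x A
  | imp A B => FreeFor y x A ∧ FreeFor y x B
  | all z A => x = z ∨ x ∉ A.fvar ∨ (y ≠ z ∧ FreeFor y x A)
  | ex z A => x = z ∨ x ∉ A.fvar ∨ (y ≠ z ∧ FreeFor y x A)
  | just _ X A => Sum.inl x ∈ X → FreeFor y x A

/-- Action of a renaming on arguments. -/
def subR (σ : ℕ → ℕ) : ℕ ⊕ K → ℕ ⊕ K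
  | .inl x => .inl (σ x)
  | .inr a => .inr a

/-- Renaming of all (free and bound) individual variables. -/
noncomputable def rename (σ : ℕ → ℕ) : Fm K → Fm K
  | pred Q args => pred Q (args.map (subR σ))
  | neg A => neg (A.rename σ)
  | imp A B => imp (A.rename σ) (B.rename σ)
  | all x A => all (σ x) (A.rename σ)
  | ex x A => ex (σ x) (A.rename σ)
  | just t X A => just t (X.image (subR σ)) (A.rename σ)

/-- Mapping the extra individual constants of a `K`-formula along `f : K → K'`. -/
noncomputable def kmap (f : K → K') : Fm K → Fm K'
  | pred Q args => pred Q (args.map (Sum.map id f))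
  | neg A => neg (A.kmap f)
  | imp A B => imp (A.kmap f) (B.kmap f)
  | all x A => all x (A.kmap f)
  | ex x A => ex x (A.kmap f)
  | just t X A => just t (X.image (Sum.map id f)) (A.kmap f)

/-- A size measure used for the well-founded recursion defining truth. -/
noncomputable def size : Fm K → ℕ
  | pred _ _ => 0
  | neg A => A.size + 1
  | imp A B => A.size + B.size + 1
  | all _ A => A.size + 1
  | ex _ A => A.size + 1
  | just _ _ A => A.size + A.fvar.card + 1


theorem fvar_msubst_subset (σ : ℕ → Option K) (A : Fm K) :
    (A.msubst σ).fvar ⊆ A.fvar := by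
  induction A generalizing σ with
  | pred Q args =>
      intro y hy
      simp only [msubst, fvar, List.mem_toFinset, List.mem_filterMap, List.mem_map] at hy ⊢
      obtain ⟨s, ⟨a, ha, rfl⟩, hget⟩ := hy
      cases a with
      | inl z =>
          cases hσ : σ z with
          | none =>
              simp [subK, hσ] at hget
              exact ⟨Sum.inl z, ha, by simp [hget]⟩
          | some b => simp [subK, hσ] at hget
      | inr b => simp [subK] at hget
  | neg A ih => exact ih σ
  | imp A B ihA ihB =>
      simp only [msubst, fvar]
      exact Finset.union_subset_union (ihA σ) (ihB σ)
  | all x A ih =>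
      simp only [msubst, fvar]
      exact Finset.erase_subset_erase x (ih _)
  | ex x A ih =>
      simp only [msubst, fvar]
      exact Finset.erase_subset_erase x (ih _)
  | just t X A ih =>
      intro y hy
      simp only [msubst, fvar, List.mem_toFinset, List.mem_filterMap,
        Finset.mem_toList, Finset.mem_image] at hy ⊢
      obtain ⟨s, ⟨a, ha, rfl⟩, hget⟩ := hy
      cases a with
      | inl z =>
          cases hσ : σ z with
          | none =>
              refine ⟨Sum.inl z, ha, ?_⟩
              simp only [subK, hσ, Option.elim] at hget
              simpa using hget
          | some b => simp [subK, hσ] at hget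
      | inr b => simp [subK] at hget

theorem size_msubst_le (σ : ℕ → Option K) (A : Fm K) :
    (A.msubst σ).size ≤ A.size := by
  induction A generalizing σ with
  | pred Q args => simp [msubst, size]
  | neg A ih => simpa [msubst, size] using ih σ
  | imp A B ihA ihB =>
      simp only [msubst, size]
      have := ihA σ; have := ihB σ; omega
  | all x A ih => simpa [msubst, size] using ih _
  | ex x A ih => simpa [msubst, size] using ih _
  | just t X A ih =>
      simp only [msubst, size]
      have h1 := ih (fun y => if Sum.inl y ∈ X then σ y else none)
      have h2 := Finset.card_le_card
        (fvar_msubst_subset (fun y => if Sum.inl y ∈ X then σ y else none) A)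
      omega

theorem size_subst1_le (x : ℕ) (a : K) (A : Fm K) : (A.subst1 x a).size ≤ A.size :=
  size_msubst_le _ A


/-- `∀A`, the universal closure of `A`. -/
noncomputable def univClosure (A : Fm K) : Fm K :=
  (A.fvar.sort (· ≤ ·)).foldr Fm.all A

theorem size_foldr_all (l : List ℕ) (A : Fm K) :
    (l.foldr Fm.all A).size = A.size + l.length := by
  induction l with
  | nil => simp
  | cons z l ih => simp only [List.foldr, size, ih, List.length_cons]; omega

theorem size_univClosure (A : Fm K) :
    A.univClosure.size = A.size + A.fvar.card := by
  simp [univClosure, size_foldr_all, Finset.length_sort]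

end Fm

/-- Embedding plain FOLP formulas into `K`-formulas. -/
noncomputable def toK {K : Type} : Fm Empty → Fm K := Fm.kmap (fun a => a.elim)

/-- Two FOLP formulas are variable variants if each can be turned into the other
by a renaming of free and bound individual variables. -/
def VariableVariant (A B : Fm Empty) : Prop := ∃ σ : Equiv.Perm ℕ, B = A.rename σ

/-- The axioms of FOLP: a complete list of first order axiom schemes together
with the justification axiom schemes Ctr, Exp, Sum, jK, jT, j4, Gen. -/
inductive FOLPAxiom : Fm Empty → Prop
  | p1 (A B : Fm Empty) : FOLPAxiom (A.imp (B.imp A))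
  | p2 (A B C : Fm Empty) : FOLPAxiom ((A.imp (B.imp C)).imp ((A.imp B).imp (A.imp C)))
  | p3 (A B : Fm Empty) : FOLPAxiom (((A.neg).imp (B.neg)).imp (B.imp A))
  | allElim (x y : ℕ) (A : Fm Empty) : Fm.FreeFor y x A → FOLPAxiom ((Fm.all x A).imp (A.vsubst x y))
  | allImp (x : ℕ) (A B : Fm Empty) : x ∉ A.fvar →
      FOLPAxiom ((Fm.all x (A.imp B)).imp (A.imp (Fm.all x B)))
  | exIntro (x y : ℕ) (A : Fm Empty) : Fm.FreeFor y x A → FOLPAxiom ((A.vsubst x y).imp (Fm.ex x A))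
  | exElim (x : ℕ) (A B : Fm Empty) : x ∉ B.fvar →
      FOLPAxiom ((Fm.all x (A.imp B)).imp ((Fm.ex x A).imp B))
  | ctr (t : Tm) (X : Finset (ℕ ⊕ Empty)) (A : Fm Empty) (y : ℕ) : Sum.inl y ∉ X → y ∉ A.fvar →
      FOLPAxiom ((Fm.just t (insert (Sum.inl y) X) A).imp (Fm.just t X A))
  | exp (t : Tm) (X : Finset (ℕ ⊕ Empty)) (A : Fm Empty) (y : ℕ) : Sum.inl y ∉ X →
      FOLPAxiom ((Fm.just t X A).imp (Fm.just t (insert (Sum.inl y) X) A))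
  | sum1 (s t : Tm) (X : Finset (ℕ ⊕ Empty)) (A : Fm Empty) : FOLPAxiom ((Fm.just s X A).imp (Fm.just (Tm.plus s t) X A))
  | sum2 (s t : Tm) (X : Finset (ℕ ⊕ Empty)) (A : Fm Empty) : FOLPAxiom ((Fm.just s X A).imp (Fm.just (Tm.plus t s) X A))
  | jK (s t : Tm) (X : Finset (ℕ ⊕ Empty)) (A B : Fm Empty) : FOLPAxiom ((Fm.just s X (A.imp B)).imp
      ((Fm.just t X A).imp (Fm.just (Tm.app s t) X B)))
  | jT (t : Tm) (X : Finset (ℕ ⊕ Empty)) (A : Fm Empty) : FOLPAxiom ((Fm.just t X A).imp A)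
  | j4 (t : Tm) (X : Finset (ℕ ⊕ Empty)) (A : Fm Empty) : FOLPAxiom ((Fm.just t X A).imp (Fm.just (Tm.bang t) X (Fm.just t X A)))
  | gen (t : Tm) (X : Finset (ℕ ⊕ Empty)) (A : Fm Empty) (x : ℕ) : Sum.inl x ∉ X →
      FOLPAxiom ((Fm.just t X A).imp (Fm.just (Tm.gen x t) X (Fm.all x A)))

/-- A constant specification is a set of pairs `(c, A)`, read `c : A`
(that is, `c :_∅ A`), where `A` is an axiom instance. -/
def ConstantSpec (CS : Set (ℕ × Fm Empty)) : Prop := ∀ p ∈ CS, FOLPAxiom p.2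

/-- `CS` is axiomatically appropriate: every axiom instance has a constant justifying it. -/
def AxiomaticallyAppropriate (CS : Set (ℕ × Fm Empty)) : Prop :=
  ∀ A, FOLPAxiom A → ∃ c, (c, A) ∈ CS

/-- `CS` is variant closed. -/
def VariantClosed (CS : Set (ℕ × Fm Empty)) : Prop :=
  ∀ c A B, VariableVariant A B → ((c, A) ∈ CS ↔ (c, B) ∈ CS)

/-- Derivability in the axiomatic system `FOLP_CS`:  axioms, axiom necessitation
restricted to `CS`, modus ponens, and universal generalization. -/
inductive Deriv (CS : Set (ℕ × Fm Empty)) : Fm Empty → Prop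
  | ax {A : Fm Empty} : FOLPAxiom A → Deriv CS A
  | an {c : ℕ} {A : Fm Empty} : (c, A) ∈ CS → Deriv CS (Fm.just (Tm.jconst c) ∅ A)
  | mp {A B : Fm Empty} : Deriv CS (A.imp B) → Deriv CS A → Deriv CS B
  | ug {A : Fm Empty} (x : ℕ) : Deriv CS A → Deriv CS (Fm.all x A)

/-- A Mkrtychev model of `FOLP_CS` with domain `D`:  an interpretation `I` of the
predicate symbols and an admissible evidence function `E` satisfying E1–E6. -/
structure MModel (CS : Set (ℕ × Fm Empty)) (D : Type) : Type where
  dom_nonempty : Nonempty D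
  I : ℕ → Set (List D)
  E : Tm → Set (Fm D)
  e1 : ∀ c A, (c, A) ∈ CS → toK A ∈ E (Tm.jconst c)
  e2 : ∀ s t (A B : Fm D), Fm.imp A B ∈ E s → A ∈ E t → B ∈ E (Tm.app s t)
  e3 : ∀ s t, E s ∪ E t ⊆ E (Tm.plus s t)
  e4 : ∀ t (A : Fm D) (X : Finset D), A ∈ E t → A.kocc ⊆ X →
      Fm.just t (X.image Sum.inr) A ∈ E (Tm.bang t)
  e5 : ∀ t (x : ℕ) (A : Fm D), A ∈ E t → Fm.all x A ∈ E (Tm.gen x t)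
  e6 : ∀ t (A : Fm D) (x : ℕ) (a : D), A ∈ E t → A.subst1 x a ∈ E t

/-- Truth of a (closed) `D`-formula in a Mkrtychev model. -/
noncomputable def MModel.Sat {CS : Set (ℕ × Fm Empty)} {D : Type} (M : MModel CS D) :
    Fm D → Prop
  | .pred Q args => ∃ as : List D, args = as.map Sum.inr ∧ as ∈ M.I Q
  | .neg A => ¬ M.Sat A
  | .imp A B => M.Sat A → M.Sat B
  | .all x A => ∀ a : D, M.Sat (A.subst1 x a)
  | .ex x A => ∃ a : D, M.Sat (A.subst1 x a)
  | .just t _ A => A ∈ M.E t ∧ M.Sat A.univClosure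
  termination_by F => F.size
  decreasing_by
    all_goals simp only [Fm.size, Fm.size_univClosure]
    all_goals first
      | omega
      | exact Nat.lt_succ_of_le (Fm.size_subst1_le _ _ _)

/-- Truth of an FOLP sentence in a Mkrtychev model. -/
noncomputable def MModel.SatSentence {CS : Set (ℕ × Fm Empty)} {D : Type}
    (M : MModel CS D) (F : Fm Empty) : Prop := M.Sat (toK F)

/-- A sentence is `FOLP_CS`-valid if it is true in every Mkrtychev model of `FOLP_CS`. -/
def FOLPValid (CS : Set (ℕ × Fm Empty)) (F : Fm Empty) : Prop :=
  ∀ (D : Type) (M : MModel CS D), M.SatSentence F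

/-- Satisfiability of a closed Par-formula `A(u₁,…,uₙ)` in a model:
`M ⊩ A(a₁,…,aₙ)` for some `a₁,…,aₙ ∈ D`. -/
noncomputable def MModel.SatPar {CS : Set (ℕ × Fm Empty)} {D : Type}
    (M : MModel CS D) (F : Fm ℕ) : Prop :=
  ∃ g : ℕ → D, M.Sat (F.kmap g)

/-- `X ⊆ Par`: the set `X` consists of parameters only. -/
def XPar (X : Finset (ℕ ⊕ ℕ)) : Prop := ∀ s ∈ X, ∃ u : ℕ, s = Sum.inr u

/-- One application of an FOLP tableau rule to a branch (represented by the set `S`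
of closed Par-formulas occurring on it), producing the list of extended branches
(one branch for a non-branching rule, two for a branching rule). -/
inductive TabRule : Set (Fm ℕ) → List (Set (Fm ℕ)) → Prop
  | fneg {S A} : Fm.neg (Fm.neg A) ∈ S → TabRule S [insert A S]
  | timp {S A B} : Fm.imp A B ∈ S → TabRule S [insert (Fm.neg A) S, insert B S]
  | fimp {S A B} : Fm.neg (Fm.imp A B) ∈ S → TabRule S [insert A (insert (Fm.neg B) S)]
  | tall {S x A} (u : ℕ) : Fm.all x A ∈ S → TabRule S [insert (A.subst1 x u) S]
  | fex {S x A} (u : ℕ) : Fm.neg (Fm.ex x A) ∈ S →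
      TabRule S [insert (Fm.neg (A.subst1 x u)) S]
  | tex {S x A} (u : ℕ) : Fm.ex x A ∈ S → (∀ F ∈ S, u ∉ F.kocc) →
      TabRule S [insert (A.subst1 x u) S]
  | fall {S x A} (u : ℕ) : Fm.neg (Fm.all x A) ∈ S → (∀ F ∈ S, u ∉ F.kocc) →
      TabRule S [insert (Fm.neg (A.subst1 x u)) S]
  | tcolon {S t X A} : Fm.just t X A ∈ S → XPar X → TabRule S [insert A.univClosure S]
  | fplus {S t s X A} : Fm.neg (Fm.just (Tm.plus t s) X A) ∈ S → XPar X →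
      TabRule S [insert (Fm.neg (Fm.just t X A)) (insert (Fm.neg (Fm.just s X A)) S)]
  | fapp {S s t X B} (A : Fm ℕ) : Fm.neg (Fm.just (Tm.app s t) X B) ∈ S → XPar X →
      (∀ u ∈ A.kocc, Sum.inr u ∈ X) →
      TabRule S [insert (Fm.neg (Fm.just s X (A.imp B))) S,
                 insert (Fm.neg (Fm.just t X A)) S]
  | fbang {S t X A} : Fm.neg (Fm.just (Tm.bang t) X (Fm.just t X A)) ∈ S → XPar X →
      TabRule S [insert (Fm.neg (Fm.just t X A)) S]
  | ctr {S t X A} (u : ℕ) : Fm.neg (Fm.just t X A) ∈ S → XPar X → Sum.inr u ∉ X →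
      TabRule S [insert (Fm.neg (Fm.just t (insert (Sum.inr u) X) A)) S]
  | exp {S t X A} (u : ℕ) : Fm.neg (Fm.just t (insert (Sum.inr u) X) A) ∈ S →
      XPar X → Sum.inr u ∉ X → u ∉ A.kocc →
      TabRule S [insert (Fm.neg (Fm.just t X A)) S]
  | ins {S t X A} (x u : ℕ) : Fm.neg (Fm.just t X (A.subst1 x u)) ∈ S → XPar X →
      TabRule S [insert (Fm.neg (Fm.just t X A)) S]
  | genx {S t X A x} : Fm.neg (Fm.just (Tm.gen x t) X (Fm.all x A)) ∈ S → XPar X →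
      TabRule S [insert (Fm.neg (Fm.just t X A)) S]

/-- `ClosedTableau CS S`: there is a closed `FOLP_CS`-tableau beginning with the
formulas of `S`.  A branch closes if it contains both `A` and `¬A`, or contains
`¬c:A` with `c:A ∈ CS`. -/
inductive ClosedTableau (CS : Set (ℕ × Fm Empty)) : Set (Fm ℕ) → Prop
  | close {S A} : A ∈ S → Fm.neg A ∈ S → ClosedTableau CS S
  | closeCS {S c A} : (c, A) ∈ CS →
      Fm.neg (Fm.just (Tm.jconst c) ∅ (toK A)) ∈ S → ClosedTableau CS S
  | step {S l} : TabRule S l → (∀ S' ∈ l, ClosedTableau CS S') → ClosedTableau CS S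

/-- An `FOLP_CS`-tableau proof of the sentence `F`: a closed tableau beginning
with `¬F`. -/
def TabProof (CS : Set (ℕ × Fm Empty)) (F : Fm Empty) : Prop :=
  ClosedTableau CS {Fm.neg (toK F)}

/-- A set of closed Par-formulas is tableau `FOLP_CS`-consistent if no finite
subset of it has a closed `FOLP_CS`-tableau. -/
def TabConsistent (CS : Set (ℕ × Fm Empty)) (Γ : Set (Fm ℕ)) : Prop :=
  ∀ S : Set (Fm ℕ), S ⊆ Γ → S.Finite → ¬ ClosedTableau CS S

/-- `Γ` is maximal: it has no proper tableau consistent extension by closed Par-formulas. -/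
def MaximalCons (CS : Set (ℕ × Fm Empty)) (Γ : Set (Fm ℕ)) : Prop :=
  TabConsistent CS Γ ∧
    ∀ Δ : Set (Fm ℕ), Γ ⊆ Δ → (∀ F ∈ Δ, F.Closed) → TabConsistent CS Δ → Δ = Γ

/-- `Γ` is E-complete (with parameters as witnesses). -/
def EComplete (Γ : Set (Fm ℕ)) : Prop :=
  (∀ (x : ℕ) (A : Fm ℕ), Fm.ex x A ∈ Γ → ∃ u : ℕ, A.subst1 x u ∈ Γ) ∧
  (∀ (x : ℕ) (A : Fm ℕ), Fm.neg (Fm.all x A) ∈ Γ → ∃ u : ℕ, Fm.neg (A.subst1 x u) ∈ Γ)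

/-- The interpretation of the canonical model determined by `Γ`:
`I(Q) = { (u₁,…,uₙ) | Q(u₁,…,uₙ) ∈ Γ }`. -/
def canI (Γ : Set (Fm ℕ)) (Q : ℕ) : Set (List ℕ) :=
  {us | Fm.pred Q (us.map Sum.inr) ∈ Γ}

/-- The evidence function of the canonical model determined by `Γ`:
`E(t) = { A | ¬ t:_{Par(A)} A ∉ Γ }`. -/
def canE (Γ : Set (Fm ℕ)) (t : Tm) : Set (Fm ℕ) :=
  {A | Fm.neg (Fm.just t (A.kocc.image Sum.inr) A) ∉ Γ}

section Aux
open Fm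

variable {K K' : Type}

lemma mem_rpart {X : Finset (ℕ ⊕ K)} {b : K} :
    b ∈ (X.toList.filterMap Sum.getRight?).toFinset ↔ Sum.inr b ∈ X := by
  simp only [List.mem_toFinset, List.mem_filterMap, Finset.mem_toList]
  constructor
  · rintro ⟨s, hs, h⟩; cases s <;> simp_all
  · intro h; exact ⟨Sum.inr b, h, rfl⟩

lemma mem_lpart {X : Finset (ℕ ⊕ K)} {x : ℕ} :
    x ∈ (X.toList.filterMap Sum.getLeft?).toFinset ↔ Sum.inl x ∈ X := by
  simp only [List.mem_toFinset, List.mem_filterMap, Finset.mem_toList]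
  constructor
  · rintro ⟨s, hs, h⟩; cases s <;> simp_all
  · intro h; exact ⟨Sum.inl x, h, rfl⟩

lemma mem_lpart_list {l : List (ℕ ⊕ K)} {x : ℕ} :
    x ∈ (l.filterMap Sum.getLeft?).toFinset ↔ Sum.inl x ∈ l := by
  simp only [List.mem_toFinset, List.mem_filterMap]
  constructor
  · rintro ⟨s, hs, h⟩; cases s <;> simp_all
  · intro h; exact ⟨Sum.inl x, h, rfl⟩

lemma mem_rpart_list {l : List (ℕ ⊕ K)} {b : K} :
    b ∈ (l.filterMap Sum.getRight?).toFinset ↔ Sum.inr b ∈ l := by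
  simp only [List.mem_toFinset, List.mem_filterMap]
  constructor
  · rintro ⟨s, hs, h⟩; cases s <;> simp_all
  · intro h; exact ⟨Sum.inr b, h, rfl⟩

lemma inl_mem_image_map {i : DecidableEq (ℕ ⊕ K')} {X : Finset (ℕ ⊕ K)} {f : K → K'} {x : ℕ} :
    Sum.inl x ∈ @Finset.image _ _ i (Sum.map id f) X ↔ Sum.inl x ∈ X := by
  simp only [Finset.mem_image]
  constructor
  · rintro ⟨s, hs, h⟩; cases s <;> simp_all
  · intro h; exact ⟨Sum.inl x, h, rfl⟩

lemma inr_mem_image_map {i : DecidableEq (ℕ ⊕ K')} {X : Finset (ℕ ⊕ K)} {f : K → K'} {b : K'} :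
    Sum.inr b ∈ @Finset.image _ _ i (Sum.map id f) X ↔ ∃ a, Sum.inr a ∈ X ∧ f a = b := by
  simp only [Finset.mem_image]
  constructor
  · rintro ⟨s, hs, h⟩
    cases s with
    | inl x => simp [Sum.map] at h
    | inr a => exact ⟨a, hs, by simpa [Sum.map] using h⟩
  · rintro ⟨a, h, rfl⟩; exact ⟨Sum.inr a, h, rfl⟩

lemma kocc_kmap (f : K → K') (A : Fm K) : (A.kmap f).kocc = A.kocc.image f := by
  induction A with
  | pred Q args =>
      ext b
      simp only [kmap, kocc, Finset.mem_image, mem_rpart_list, List.mem_map]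
      constructor
      · rintro ⟨s, hs, h⟩; cases s <;> simp_all
        · exact ⟨_, hs, h⟩
      · rintro ⟨a, h, rfl⟩; exact ⟨Sum.inr a, h, rfl⟩
  | neg A ih => simpa [kmap, kocc] using ih
  | imp A B ihA ihB => simp [kmap, kocc, ihA, ihB, Finset.image_union]
  | all x A ih => simpa [kmap, kocc] using ih
  | ex x A ih => simpa [kmap, kocc] using ih
  | just t X A ih =>
      ext b
      simp only [kmap, kocc, Finset.mem_union, mem_rpart]
      rw [ih, inr_mem_image_map]
      simp only [Finset.mem_image, Finset.mem_union, mem_rpart]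
      constructor
      · rintro (⟨a, ha, rfl⟩ | ⟨a, ha, rfl⟩)
        · exact ⟨a, Or.inl ha, rfl⟩
        · exact ⟨a, Or.inr ha, rfl⟩
      · rintro ⟨a, ha | ha, rfl⟩
        · exact Or.inl ⟨a, ha, rfl⟩
        · exact Or.inr ⟨a, ha, rfl⟩

lemma fvar_kmap (f : K → K') (A : Fm K) : (A.kmap f).fvar = A.fvar := by
  induction A with
  | pred Q args =>
      ext x
      simp only [kmap, fvar, mem_lpart_list, List.mem_map]
      constructor
      · rintro ⟨s, hs, h⟩; cases s <;> simp_all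
      · intro h; exact ⟨Sum.inl x, h, rfl⟩
  | neg A ih => simpa [kmap, fvar] using ih
  | imp A B ihA ihB => simp [kmap, fvar, ihA, ihB]
  | all x A ih => simp [kmap, fvar, ih]
  | ex x A ih => simp [kmap, fvar, ih]
  | just t X A ih =>
      ext x
      simp only [kmap, fvar, mem_lpart, inl_mem_image_map]

lemma kmap_id (A : Fm K) : A.kmap id = A := by
  induction A with
  | pred Q args => simp [kmap]
  | neg A ih => simp [kmap, ih]
  | imp A B ihA ihB => simp [kmap, ihA, ihB]
  | all x A ih => simp [kmap, ih]
  | ex x A ih => simp [kmap, ih]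
  | just t X A ih => simp [kmap, ih]

lemma kmap_comp {K'' : Type} (f : K' → K'') (g : K → K') (A : Fm K) :
    (A.kmap g).kmap f = A.kmap (f ∘ g) := by
  induction A with
  | pred Q args => simp [kmap, Sum.map_map]
  | neg A ih => simp [kmap, ih]
  | imp A B ihA ihB => simp [kmap, ihA, ihB]
  | all x A ih => simp [kmap, ih]
  | ex x A ih => simp [kmap, ih]
  | just t X A ih => simp [kmap, ih, Finset.image_image, Sum.map_map]

lemma kmap_toK (f : K → K') (A : Fm Empty) : (toK A).kmap f = toK A := by
  unfold toK
  rw [kmap_comp]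
  congr 1
  funext a
  exact a.elim

lemma kmap_congr {f g : K → K'} (A : Fm K) (h : ∀ a ∈ A.kocc, f a = g a) :
    A.kmap f = A.kmap g := by
  induction A with
  | pred Q args =>
      simp only [kmap, pred.injEq, true_and]
      apply List.map_congr_left
      intro s hs
      cases s with
      | inl x => simp [Sum.map]
      | inr a =>
          have : a ∈ (Fm.pred (K := K) Q args).kocc := by
            simp only [kocc, mem_rpart_list]; exact hs
          simp [Sum.map, h a this]
  | neg A ih => simp only [kmap, neg.injEq]; exact ih h
  | imp A B ihA ihB =>
      simp only [kmap, imp.injEq]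
      exact ⟨ihA fun a ha => h a (Finset.mem_union_left _ ha),
             ihB fun a ha => h a (Finset.mem_union_right _ ha)⟩
  | all x A ih => simp only [kmap, all.injEq, true_and]; exact ih h
  | ex x A ih => simp only [kmap, ex.injEq, true_and]; exact ih h
  | just t X A ih =>
      simp only [kmap, just.injEq, true_and]
      constructor
      · apply Finset.image_congr
        intro s hs
        cases s with
        | inl x => simp [Sum.map]
        | inr a =>
            have : a ∈ (Fm.just t X A).kocc := by
              simp only [kocc, Finset.mem_union, mem_rpart]; exact Or.inr hs
            simp [Sum.map, h a this]
      · exact ih fun a ha => h a (Finset.mem_union_left _ ha)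

end Aux
section Aux2
open Fm

variable {K K' : Type}

lemma subK_map (f : K → K') (σ : ℕ → Option K) (s : ℕ ⊕ K) :
    Sum.map id f (subK σ s) = subK (fun y => (σ y).map f) (Sum.map id f s) := by
  cases s with
  | inl x => cases h : σ x <;> simp [subK, h, Sum.map]
  | inr a => simp [subK, Sum.map]

lemma kmap_msubst (f : K → K') (σ : ℕ → Option K) (A : Fm K) :
    (A.msubst σ).kmap f = (A.kmap f).msubst (fun y => (σ y).map f) := by
  induction A generalizing σ with
  | pred Q args =>
      simp only [msubst, kmap, List.map_map, pred.injEq, true_and]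
      exact List.map_congr_left fun s _ => subK_map f σ s
  | neg A ih => simp [msubst, kmap, ih]
  | imp A B ihA ihB => simp [msubst, kmap, ihA, ihB]
  | all x A ih =>
      simp only [msubst, kmap, all.injEq, true_and]
      rw [ih]
      congr 1
      funext y
      by_cases h : y = x <;> simp [h]
  | ex x A ih =>
      simp only [msubst, kmap, ex.injEq, true_and]
      rw [ih]
      congr 1
      funext y
      by_cases h : y = x <;> simp [h]
  | just t X A ih =>
      simp only [msubst, kmap, just.injEq, true_and, Finset.image_image]
      constructor
      · exact Finset.image_congr fun s _ => subK_map f σ s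
      · rw [ih]
        congr 1
        funext y
        simp only [inl_mem_image_map]
        by_cases h : Sum.inl y ∈ X <;> simp [h]

lemma kmap_subst1 (f : K → K') (x : ℕ) (a : K) (A : Fm K) :
    (A.subst1 x a).kmap f = (A.kmap f).subst1 x (f a) := by
  unfold Fm.subst1
  rw [kmap_msubst]
  congr 1
  funext y
  by_cases h : y = x <;> simp [h]

lemma kmap_foldr_all (f : K → K') (l : List ℕ) (A : Fm K) :
    (l.foldr Fm.all A).kmap f = l.foldr Fm.all (A.kmap f) := by
  induction l with
  | nil => rfl
  | cons z l ih => simp [kmap, ih]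

lemma kmap_univClosure (f : K → K') (A : Fm K) :
    (A.univClosure).kmap f = (A.kmap f).univClosure := by
  unfold Fm.univClosure
  rw [kmap_foldr_all, fvar_kmap]

lemma kocc_subset_msubst (σ : ℕ → Option K) (A : Fm K) :
    A.kocc ⊆ (A.msubst σ).kocc := by
  induction A generalizing σ with
  | pred Q args =>
      intro b hb
      simp only [kocc, mem_rpart_list, msubst, List.mem_map] at hb ⊢
      exact ⟨Sum.inr b, hb, rfl⟩
  | neg A ih => exact ih σ
  | imp A B ihA ihB =>
      simp only [kocc, msubst]
      exact Finset.union_subset_union (ihA σ) (ihB σ)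
  | all x A ih => exact ih _
  | ex x A ih => exact ih _
  | just t X A ih =>
      simp only [kocc, msubst]
      apply Finset.union_subset_union (ih _)
      intro b hb
      rw [mem_rpart] at hb ⊢
      exact Finset.mem_image.2 ⟨Sum.inr b, hb, rfl⟩

lemma closed_negjust (t : Tm) (Z : Finset ℕ) (A : Fm ℕ) :
    (Fm.neg (Fm.just t (Z.image Sum.inr) A)).Closed := by
  simp only [Fm.Closed, fvar]
  rw [Finset.eq_empty_iff_forall_notMem]
  intro x hx
  rw [mem_lpart, Finset.mem_image] at hx
  obtain ⟨a, _, h⟩ := hx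
  exact absurd h (by simp)

lemma XPar_image_inr (Z : Finset ℕ) : XPar (Z.image Sum.inr) := by
  intro s hs
  obtain ⟨a, _, rfl⟩ := Finset.mem_image.1 hs
  exact ⟨a, rfl⟩

lemma XPar_image_map {i : DecidableEq (ℕ ⊕ ℕ)} {π : ℕ → ℕ} {X : Finset (ℕ ⊕ ℕ)} (h : XPar X) :
    XPar (@Finset.image _ _ i (Sum.map id π) X) := by
  intro s hs
  obtain ⟨s₀, hs₀, rfl⟩ := Finset.mem_image.1 hs
  obtain ⟨u, rfl⟩ := h s₀ hs₀
  exact ⟨π u, rfl⟩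

lemma inr_not_mem_image_map {i : DecidableEq (ℕ ⊕ ℕ)} {π : ℕ → ℕ} (hπ : Function.Injective π)
    {X : Finset (ℕ ⊕ ℕ)} {u : ℕ} (h : Sum.inr u ∉ X) :
    Sum.inr (π u) ∉ @Finset.image _ _ i (Sum.map id π) X := by
  intro hmem
  obtain ⟨a, ha, hfa⟩ := inr_mem_image_map.1 hmem
  exact h (hπ hfa ▸ ha)

lemma image_map_insert_inr {i1 i2 : DecidableEq (ℕ ⊕ ℕ)} (π : ℕ → ℕ) (u : ℕ)
    (X : Finset (ℕ ⊕ ℕ)) :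
    @Finset.image _ _ i2 (Sum.map id π) (@insert _ _ (@Finset.instInsert _ i1) (Sum.inr u) X)
      = @insert _ _ (@Finset.instInsert _ (@instDecidableEqSum ℕ ℕ instDecidableEqNat instDecidableEqNat))
          (Sum.inr (π u)) (@Finset.image _ _ i2 (Sum.map id π) X) := by
  ext s
  simp only [Finset.mem_image, Finset.mem_insert]
  constructor
  · rintro ⟨s₀, (rfl | hs₀), rfl⟩
    · exact Or.inl rfl
    · exact Or.inr ⟨s₀, hs₀, rfl⟩
  · rintro (rfl | ⟨s₀, hs₀, rfl⟩)
    · exact ⟨Sum.inr u, Or.inl rfl, rfl⟩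
    · exact ⟨s₀, Or.inr hs₀, rfl⟩

end Aux2
section Aux3
open Fm

lemma mem_kocc_kmap {K K' : Type} {f : K → K'} {A : Fm K} {b : K'} :
    b ∈ (A.kmap f).kocc ↔ ∃ a ∈ A.kocc, f a = b := by
  rw [kocc_kmap, Finset.mem_image]

lemma exists_fresh {T : Set (Fm ℕ)} (hT : T.Finite) : ∃ u : ℕ, ∀ F ∈ T, u ∉ F.kocc := by
  have hfin : (⋃ F ∈ T, (F.kocc : Set ℕ)).Finite :=
    hT.biUnion (fun F _ => F.kocc.finite_toSet)
  obtain ⟨u, hu⟩ := hfin.infinite_compl.nonempty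
  exact ⟨u, fun F hF hmem => hu (Set.mem_biUnion hF (by exact_mod_cast hmem))⟩

theorem ct_ren {CS : Set (ℕ × Fm Empty)} {S : Set (Fm ℕ)} (h : ClosedTableau CS S) :
    ∀ π : ℕ → ℕ, Function.Injective π → ∀ T : Set (Fm ℕ),
      (fun F : Fm ℕ => F.kmap π) '' S ⊆ T → T.Finite → ClosedTableau CS T := by
  induction h with
  | @close S A hA hnA =>
      intro π hπ T hST hT
      refine ClosedTableau.close (A := A.kmap π) (hST (Set.mem_image_of_mem _ hA)) ?_
      simpa [Fm.kmap] using hST (Set.mem_image_of_mem _ hnA)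
  | @closeCS S c A hcs hmem =>
      intro π hπ T hST hT
      refine ClosedTableau.closeCS hcs (c := c) (A := A) ?_
      simpa [Fm.kmap, kmap_toK] using hST (Set.mem_image_of_mem _ hmem)
  | @step S l r hsub IH =>
      intro π hπ T hST hT
      have hins : ∀ (F : Fm ℕ), (fun G : Fm ℕ => G.kmap π) '' (insert F S)
          ⊆ insert (F.kmap π) T := by
        intro F
        rw [Set.image_insert_eq]
        exact Set.insert_subset_insert hST
      cases r with
      | @fneg A hG =>
          refine ClosedTableau.step
            (TabRule.fneg (A := A.kmap π)
              (by simpa [Fm.kmap] using hST (Set.mem_image_of_mem _ hG))) ?_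
          rintro S' hS'
          simp only [List.mem_singleton] at hS'
          subst hS'
          exact IH _ (List.mem_singleton.mpr rfl) π hπ _ (hins A) (hT.insert _)
      | @timp A B hG =>
          refine ClosedTableau.step
            (TabRule.timp (A := A.kmap π) (B := B.kmap π)
              (by simpa [Fm.kmap] using hST (Set.mem_image_of_mem _ hG))) ?_
          rintro S' hS'
          simp only [List.mem_cons, List.mem_singleton, List.not_mem_nil, or_false] at hS'
          rcases hS' with rfl | rfl
          · exact IH _ List.mem_cons_self π hπ _ (by simpa [Fm.kmap] using hins (Fm.neg A)) (hT.insert _)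
          · exact IH _ (List.mem_cons_of_mem _ (List.mem_singleton.mpr rfl)) π hπ _ (hins B) (hT.insert _)
      | @fimp A B hG =>
          refine ClosedTableau.step
            (TabRule.fimp (A := A.kmap π) (B := B.kmap π)
              (by simpa [Fm.kmap] using hST (Set.mem_image_of_mem _ hG))) ?_
          rintro S' hS'
          simp only [List.mem_singleton] at hS'
          subst hS'
          refine IH _ (List.mem_singleton.mpr rfl) π hπ _ ?_ ((hT.insert _).insert _)
          rw [Set.image_insert_eq, Set.image_insert_eq]
          simp only [Fm.kmap]
          exact Set.insert_subset_insert (Set.insert_subset_insert hST)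
      | @tall x A u hG =>
          refine ClosedTableau.step
            (TabRule.tall (A := A.kmap π) (u := π u)
              (by simpa [Fm.kmap] using hST (Set.mem_image_of_mem _ hG))) ?_
          rintro S' hS'
          simp only [List.mem_singleton] at hS'
          subst hS'
          refine IH _ (List.mem_singleton.mpr rfl) π hπ _ ?_ (hT.insert _)
          simpa [kmap_subst1] using hins (A.subst1 x u)
      | @fex x A u hG =>
          refine ClosedTableau.step
            (TabRule.fex (A := A.kmap π) (u := π u)
              (by simpa [Fm.kmap] using hST (Set.mem_image_of_mem _ hG))) ?_
          rintro S' hS'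
          simp only [List.mem_singleton] at hS'
          subst hS'
          refine IH _ (List.mem_singleton.mpr rfl) π hπ _ ?_ (hT.insert _)
          simpa [Fm.kmap, kmap_subst1] using hins (Fm.neg (A.subst1 x u))
      | @tex x A u hG hfresh =>
          have trig : Fm.ex x (A.kmap π) ∈ T := by
            simpa [Fm.kmap] using hST (Set.mem_image_of_mem _ hG)
          obtain ⟨u', hu'⟩ := exists_fresh hT
          refine ClosedTableau.step
            (TabRule.tex (A := A.kmap π) u' trig hu') ?_
          rintro S' hS'
          simp only [List.mem_singleton] at hS'
          subst hS'
          set π' : ℕ → ℕ := fun v => Equiv.swap (π u) u' (π v) with hπ'def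
          have hπ'inj : Function.Injective π' := (Equiv.swap (π u) u').injective.comp hπ
          have hπ'u : π' u = u' := by simp [hπ'def]
          have hagree : ∀ F ∈ S, F.kmap π' = F.kmap π := by
            intro F hF
            refine kmap_congr _ fun a ha => ?_
            have h1 : π a ≠ π u := fun hc => hfresh F hF (hπ hc ▸ ha)
            have h2 : π a ≠ u' := by
              intro hc
              exact hu' _ (hST (Set.mem_image_of_mem _ hF))
                (hc ▸ mem_kocc_kmap.2 ⟨a, ha, rfl⟩)
            exact Equiv.swap_apply_of_ne_of_ne h1 h2
          have hAagree : A.kmap π' = A.kmap π := by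
            have := hagree _ hG
            simpa [Fm.kmap] using this
          refine IH _ (List.mem_singleton.mpr rfl) π' hπ'inj _ ?_ (hT.insert _)
          rw [Set.image_insert_eq, kmap_subst1, hAagree, hπ'u]
          refine Set.insert_subset_insert ?_
          rintro _ ⟨F, hF, rfl⟩
          show Fm.kmap π' F ∈ T
          rw [hagree F hF]
          exact hST (Set.mem_image_of_mem _ hF)
      | @fall x A u hG hfresh =>
          have trig : Fm.neg (Fm.all x (A.kmap π)) ∈ T := by
            simpa [Fm.kmap] using hST (Set.mem_image_of_mem _ hG)
          obtain ⟨u', hu'⟩ := exists_fresh hT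
          refine ClosedTableau.step
            (TabRule.fall (A := A.kmap π) u' trig hu') ?_
          rintro S' hS'
          simp only [List.mem_singleton] at hS'
          subst hS'
          set π' : ℕ → ℕ := fun v => Equiv.swap (π u) u' (π v) with hπ'def
          have hπ'inj : Function.Injective π' := (Equiv.swap (π u) u').injective.comp hπ
          have hπ'u : π' u = u' := by simp [hπ'def]
          have hagree : ∀ F ∈ S, F.kmap π' = F.kmap π := by
            intro F hF
            refine kmap_congr _ fun a ha => ?_
            have h1 : π a ≠ π u := fun hc => hfresh F hF (hπ hc ▸ ha)
            have h2 : π a ≠ u' := by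
              intro hc
              exact hu' _ (hST (Set.mem_image_of_mem _ hF))
                (hc ▸ mem_kocc_kmap.2 ⟨a, ha, rfl⟩)
            exact Equiv.swap_apply_of_ne_of_ne h1 h2
          have hAagree : A.kmap π' = A.kmap π := by
            have := hagree _ hG
            simpa [Fm.kmap] using this
          refine IH _ (List.mem_singleton.mpr rfl) π' hπ'inj _ ?_ (hT.insert _)
          rw [Set.image_insert_eq]
          simp only [Fm.kmap, kmap_subst1, hAagree, hπ'u]
          refine Set.insert_subset_insert ?_
          rintro _ ⟨F, hF, rfl⟩
          show Fm.kmap π' F ∈ T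
          rw [hagree F hF]
          exact hST (Set.mem_image_of_mem _ hF)
      | @tcolon t X A hG hX =>
          refine ClosedTableau.step
            (TabRule.tcolon (t := t) (A := A.kmap π)
              (by simpa [Fm.kmap] using hST (Set.mem_image_of_mem _ hG))
              (XPar_image_map hX)) ?_
          rintro S' hS'
          simp only [List.mem_singleton] at hS'
          subst hS'
          refine IH _ (List.mem_singleton.mpr rfl) π hπ _ ?_ (hT.insert _)
          simpa [kmap_univClosure] using hins A.univClosure
      | @fplus t s X A hG hX =>
          refine ClosedTableau.step
            (TabRule.fplus (t := t) (s := s) (A := A.kmap π)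
              (by simpa [Fm.kmap] using hST (Set.mem_image_of_mem _ hG))
              (XPar_image_map hX)) ?_
          rintro S' hS'
          simp only [List.mem_singleton] at hS'
          subst hS'
          refine IH _ (List.mem_singleton.mpr rfl) π hπ _ ?_ ((hT.insert _).insert _)
          rw [Set.image_insert_eq, Set.image_insert_eq]
          simp only [Fm.kmap]
          exact Set.insert_subset_insert (Set.insert_subset_insert hST)
      | @fapp s t X B A hG hX hsubX =>
          refine ClosedTableau.step
            (TabRule.fapp (s := s) (t := t)
              (B := B.kmap π) (A.kmap π)
              (by simpa [Fm.kmap] using hST (Set.mem_image_of_mem _ hG))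
              (XPar_image_map hX) ?_) ?_
          · intro v hv
            obtain ⟨a, ha, rfl⟩ := mem_kocc_kmap.1 hv
            exact inr_mem_image_map.2 ⟨a, hsubX a ha, rfl⟩
          · rintro S' hS'
            simp only [List.mem_cons, List.mem_singleton, List.not_mem_nil, or_false] at hS'
            rcases hS' with rfl | rfl
            · refine IH _ List.mem_cons_self π hπ _ ?_ (hT.insert _)
              simpa [Fm.kmap] using hins (Fm.neg (Fm.just s X (A.imp B)))
            · refine IH _ (List.mem_cons_of_mem _ (List.mem_singleton.mpr rfl)) π hπ _ ?_ (hT.insert _)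
              simpa [Fm.kmap] using hins (Fm.neg (Fm.just t X A))
      | @fbang t X A hG hX =>
          refine ClosedTableau.step
            (TabRule.fbang (t := t) (A := A.kmap π)
              (by simpa [Fm.kmap] using hST (Set.mem_image_of_mem _ hG))
              (XPar_image_map hX)) ?_
          rintro S' hS'
          simp only [List.mem_singleton] at hS'
          subst hS'
          refine IH _ (List.mem_singleton.mpr rfl) π hπ _ ?_ (hT.insert _)
          simpa [Fm.kmap] using hins (Fm.neg (Fm.just t X A))
      | @ctr t X A u hG hX hu =>
          refine ClosedTableau.step
            (TabRule.ctr (t := t) (A := A.kmap π) (π u)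
              (by simpa [Fm.kmap] using hST (Set.mem_image_of_mem _ hG))
              (XPar_image_map hX) (inr_not_mem_image_map hπ hu)) ?_
          rintro S' hS'
          simp only [List.mem_singleton] at hS'
          subst hS'
          refine IH _ (List.mem_singleton.mpr rfl) π hπ _ ?_ (hT.insert _)
          have h' := hins (Fm.neg (Fm.just t (insert (Sum.inr u) X) A))
          simp only [Fm.kmap, image_map_insert_inr] at h'
          exact h'
      | @exp t X A u hG hX hu hukocc =>
          have trig := hST (Set.mem_image_of_mem _ hG)
          simp only [Fm.kmap, image_map_insert_inr] at trig
          have hukocc' : π u ∉ (A.kmap π).kocc := by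
            intro hc
            obtain ⟨a, ha, hfa⟩ := mem_kocc_kmap.1 hc
            exact hukocc (hπ hfa ▸ ha)
          refine ClosedTableau.step
            (TabRule.exp (t := t) (A := A.kmap π) (π u)
              trig (XPar_image_map hX) (inr_not_mem_image_map hπ hu) hukocc') ?_
          rintro S' hS'
          simp only [List.mem_singleton] at hS'
          subst hS'
          refine IH _ (List.mem_singleton.mpr rfl) π hπ _ ?_ (hT.insert _)
          simpa [Fm.kmap] using hins (Fm.neg (Fm.just t X A))
      | @ins t X A x u hG hX =>
          have trig := hST (Set.mem_image_of_mem _ hG)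
          simp only [Fm.kmap, kmap_subst1] at trig
          refine ClosedTableau.step
            (TabRule.ins (t := t) (A := A.kmap π) x (π u)
              trig (XPar_image_map hX)) ?_
          rintro S' hS'
          simp only [List.mem_singleton] at hS'
          subst hS'
          refine IH _ (List.mem_singleton.mpr rfl) π hπ _ ?_ (hT.insert _)
          simpa [Fm.kmap] using hins (Fm.neg (Fm.just t X A))
      | @genx t X A x hG hX =>
          refine ClosedTableau.step
            (TabRule.genx (t := t) (A := A.kmap π) (x := x)
              (by simpa [Fm.kmap] using hST (Set.mem_image_of_mem _ hG))
              (XPar_image_map hX)) ?_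
          rintro S' hS'
          simp only [List.mem_singleton] at hS'
          subst hS'
          refine IH _ (List.mem_singleton.mpr rfl) π hπ _ ?_ (hT.insert _)
          simpa [Fm.kmap] using hins (Fm.neg (Fm.just t X A))

theorem ct_mono {CS : Set (ℕ × Fm Empty)} {S T : Set (Fm ℕ)} (h : ClosedTableau CS S)
    (hST : S ⊆ T) (hT : T.Finite) : ClosedTableau CS T := by
  refine ct_ren h id Function.injective_id T ?_ hT
  simpa [kmap_id] using hST

end Aux3
section Aux4
open Fm

variable {CS : Set (ℕ × Fm Empty)} {Γ : Set (Fm ℕ)}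

lemma maximal_insert (hmax : MaximalCons CS Γ) (hclosed : ∀ F ∈ Γ, F.Closed)
    {F : Fm ℕ} (hFc : F.Closed) (hF : F ∉ Γ) :
    ∃ S₀ : Set (Fm ℕ), S₀ ⊆ Γ ∧ S₀.Finite ∧ ClosedTableau CS (insert F S₀) := by
  by_cases hcons : TabConsistent CS (insert F Γ)
  · exfalso
    have heq := hmax.2 (insert F Γ) (Set.subset_insert _ _)
      (by rintro G (rfl | hG); exact hFc; exact hclosed G hG) hcons
    exact hF (heq ▸ Set.mem_insert F Γ)
  · rw [TabConsistent] at hcons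
    push_neg at hcons
    obtain ⟨S, hSsub, hSfin, hSct⟩ := hcons
    by_cases hFS : F ∈ S
    · refine ⟨S \ {F}, ?_, hSfin.diff, ?_⟩
      · rintro G ⟨hG1, hG2⟩
        rcases hSsub hG1 with rfl | h
        · exact absurd rfl hG2
        · exact h
      · rwa [Set.insert_diff_singleton, Set.insert_eq_self.2 hFS]
    · exfalso
      refine hmax.1 S ?_ hSfin hSct
      intro G hG
      rcases hSsub hG with rfl | h
      · exact absurd hG hFS
      · exact h

lemma step1 (hmax : MaximalCons CS Γ) (hclosed : ∀ F ∈ Γ, F.Closed)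
    {G F : Fm ℕ} (hG : G ∈ Γ) (hFc : F.Closed)
    (hrule : ∀ S : Set (Fm ℕ), G ∈ S → TabRule S [insert F S]) : F ∈ Γ := by
  by_contra hF
  obtain ⟨S₀, hsub, hfin, hct⟩ := maximal_insert hmax hclosed hFc hF
  refine hmax.1 (insert G S₀) (Set.insert_subset hG hsub) (hfin.insert _) ?_
  refine ClosedTableau.step (hrule _ (Set.mem_insert _ _)) ?_
  rintro S' hS'
  simp only [List.mem_singleton] at hS'
  subst hS'
  exact ct_mono hct (Set.insert_subset_insert (Set.subset_insert _ _))
    ((hfin.insert _).insert _)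

lemma step2 (hmax : MaximalCons CS Γ) (hclosed : ∀ F ∈ Γ, F.Closed)
    {G F₁ F₂ : Fm ℕ} (hG : G ∈ Γ) (h1c : F₁.Closed) (h2c : F₂.Closed)
    (hrule : ∀ S : Set (Fm ℕ), G ∈ S → TabRule S [insert F₁ (insert F₂ S)]) :
    F₁ ∈ Γ ∧ F₂ ∈ Γ := by
  constructor
  · by_contra hF
    obtain ⟨S₀, hsub, hfin, hct⟩ := maximal_insert hmax hclosed h1c hF
    refine hmax.1 (insert G S₀) (Set.insert_subset hG hsub) (hfin.insert _) ?_
    refine ClosedTableau.step (hrule _ (Set.mem_insert _ _)) ?_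
    rintro S' hS'
    simp only [List.mem_singleton] at hS'
    subst hS'
    refine ct_mono hct ?_ (((hfin.insert _).insert _).insert _)
    intro y hy
    rcases hy with rfl | hy
    · exact Set.mem_insert _ _
    · exact Set.mem_insert_of_mem _ (Set.mem_insert_of_mem _ (Set.mem_insert_of_mem _ hy))
  · by_contra hF
    obtain ⟨S₀, hsub, hfin, hct⟩ := maximal_insert hmax hclosed h2c hF
    refine hmax.1 (insert G S₀) (Set.insert_subset hG hsub) (hfin.insert _) ?_
    refine ClosedTableau.step (hrule _ (Set.mem_insert _ _)) ?_
    rintro S' hS'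
    simp only [List.mem_singleton] at hS'
    subst hS'
    refine ct_mono hct ?_ (((hfin.insert _).insert _).insert _)
    intro y hy
    rcases hy with rfl | hy
    · exact Set.mem_insert_of_mem _ (Set.mem_insert _ _)
    · exact Set.mem_insert_of_mem _ (Set.mem_insert_of_mem _ (Set.mem_insert_of_mem _ hy))

lemma stepBr (hmax : MaximalCons CS Γ) (hclosed : ∀ F ∈ Γ, F.Closed)
    {G F₁ F₂ : Fm ℕ} (hG : G ∈ Γ) (h1c : F₁.Closed) (h2c : F₂.Closed)
    (hrule : ∀ S : Set (Fm ℕ), G ∈ S → TabRule S [insert F₁ S, insert F₂ S]) :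
    F₁ ∈ Γ ∨ F₂ ∈ Γ := by
  by_contra hF
  push_neg at hF
  obtain ⟨S₁, hsub1, hfin1, hct1⟩ := maximal_insert hmax hclosed h1c hF.1
  obtain ⟨S₂, hsub2, hfin2, hct2⟩ := maximal_insert hmax hclosed h2c hF.2
  refine hmax.1 (insert G (S₁ ∪ S₂))
    (Set.insert_subset hG (Set.union_subset hsub1 hsub2))
    ((hfin1.union hfin2).insert _) ?_
  refine ClosedTableau.step (hrule _ (Set.mem_insert _ _)) ?_
  rintro S' hS'
  simp only [List.mem_cons, List.mem_singleton, List.not_mem_nil, or_false] at hS'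
  rcases hS' with rfl | rfl
  · refine ct_mono hct1 ?_ (((hfin1.union hfin2).insert _).insert _)
    refine Set.insert_subset_insert ?_
    exact (Set.subset_union_left).trans (Set.subset_insert _ _)
  · refine ct_mono hct2 ?_ (((hfin1.union hfin2).insert _).insert _)
    refine Set.insert_subset_insert ?_
    exact (Set.subset_union_right).trans (Set.subset_insert _ _)

lemma inr_not_mem_erase_image (u : ℕ) (Z : Finset ℕ) :
    Sum.inr u ∉ (Z.erase u).image (Sum.inr : ℕ → ℕ ⊕ ℕ) := by
  intro h
  obtain ⟨a, ha, hinj⟩ := Finset.mem_image.1 h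
  cases Sum.inr_injective hinj
  exact (Finset.mem_erase.1 ha).1 rfl

lemma image_inr_insert_erase {u : ℕ} {Z : Finset ℕ} (hu : u ∈ Z) :
    Z.image (Sum.inr : ℕ → ℕ ⊕ ℕ) = insert (Sum.inr u) ((Z.erase u).image Sum.inr) := by
  conv_lhs => rw [← Finset.insert_erase hu]
  rw [Finset.image_insert]

lemma erase_sdiff_card {Z K : Finset ℕ} {u : ℕ} {n : ℕ} (hu : u ∈ Z \ K)
    (hc : (Z \ K).card = n + 1) : ((Z.erase u) \ K).card = n := by
  have : (Z.erase u) \ K = (Z \ K).erase u := by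
    ext b
    simp only [Finset.mem_erase, Finset.mem_sdiff]
    tauto
  rw [this, Finset.card_erase_of_mem hu, hc]
  omega

lemma XPar_insert_inr (u : ℕ) {X : Finset (ℕ ⊕ ℕ)} (hX : XPar X) :
    XPar (insert (Sum.inr u) X) := by
  rintro s hs
  rcases Finset.mem_insert.1 hs with rfl | hs
  · exact ⟨u, rfl⟩
  · exact hX s hs

lemma closed_negjust' {t : Tm} {X : Finset (ℕ ⊕ ℕ)} {A : Fm ℕ} (hX : XPar X) :
    (Fm.neg (Fm.just t X A)).Closed := by
  simp only [Fm.Closed, Fm.fvar]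
  rw [Finset.eq_empty_iff_forall_notMem]
  intro x hx
  rw [mem_lpart] at hx
  obtain ⟨u, hu⟩ := hX _ hx
  exact absurd hu (by simp)

lemma shrink (hmax : MaximalCons CS Γ) (hclosed : ∀ F ∈ Γ, F.Closed)
    (t : Tm) (A : Fm ℕ) :
    ∀ Z : Finset ℕ, A.kocc ⊆ Z →
      Fm.neg (Fm.just t (Z.image Sum.inr) A) ∈ Γ →
      Fm.neg (Fm.just t (A.kocc.image Sum.inr) A) ∈ Γ := by
  suffices H : ∀ n (Z : Finset ℕ), (Z \ A.kocc).card = n → A.kocc ⊆ Z →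
      Fm.neg (Fm.just t (Z.image Sum.inr) A) ∈ Γ →
      Fm.neg (Fm.just t (A.kocc.image Sum.inr) A) ∈ Γ by
    exact fun Z h1 h2 => H _ Z rfl h1 h2
  intro n
  induction n with
  | zero =>
      intro Z hcard hsub hmem
      have hZ : Z = A.kocc := Finset.Subset.antisymm
        (by rwa [Finset.card_eq_zero, Finset.sdiff_eq_empty_iff_subset] at hcard) hsub
      rwa [hZ] at hmem
  | succ n ih =>
      intro Z hcard hsub hmem
      obtain ⟨u, hu⟩ := Finset.card_pos.1 (by omega : 0 < (Z \ A.kocc).card)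
      have huZ : u ∈ Z := (Finset.mem_sdiff.1 hu).1
      have huA : u ∉ A.kocc := (Finset.mem_sdiff.1 hu).2
      rw [image_inr_insert_erase huZ] at hmem
      have hstep : Fm.neg (Fm.just t ((Z.erase u).image Sum.inr) A) ∈ Γ := by
        refine step1 hmax hclosed hmem (closed_negjust _ _ _) ?_
        intro S hGS
        exact TabRule.exp u hGS (XPar_image_inr _) (inr_not_mem_erase_image u Z) huA
      exact ih (Z.erase u) (erase_sdiff_card hu hcard)
        (Finset.subset_erase.2 ⟨hsub, huA⟩) hstep

lemma grow (hmax : MaximalCons CS Γ) (hclosed : ∀ F ∈ Γ, F.Closed)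
    (t : Tm) (A : Fm ℕ)
    (hmem : Fm.neg (Fm.just t (A.kocc.image Sum.inr) A) ∈ Γ) :
    ∀ Z : Finset ℕ, A.kocc ⊆ Z → Fm.neg (Fm.just t (Z.image Sum.inr) A) ∈ Γ := by
  suffices H : ∀ n (Z : Finset ℕ), (Z \ A.kocc).card = n → A.kocc ⊆ Z →
      Fm.neg (Fm.just t (Z.image Sum.inr) A) ∈ Γ by
    exact fun Z h1 => H _ Z rfl h1
  intro n
  induction n with
  | zero =>
      intro Z hcard hsub
      have hZ : Z = A.kocc := Finset.Subset.antisymm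
        (by rwa [Finset.card_eq_zero, Finset.sdiff_eq_empty_iff_subset] at hcard) hsub
      rwa [hZ]
  | succ n ih =>
      intro Z hcard hsub
      obtain ⟨u, hu⟩ := Finset.card_pos.1 (by omega : 0 < (Z \ A.kocc).card)
      have huZ : u ∈ Z := (Finset.mem_sdiff.1 hu).1
      have huA : u ∉ A.kocc := (Finset.mem_sdiff.1 hu).2
      have hprev : Fm.neg (Fm.just t ((Z.erase u).image Sum.inr) A) ∈ Γ :=
        ih (Z.erase u) (erase_sdiff_card hu hcard) (Finset.subset_erase.2 ⟨hsub, huA⟩)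
      rw [image_inr_insert_erase huZ]
      refine step1 hmax hclosed hprev
        (closed_negjust' (XPar_insert_inr u (XPar_image_inr _))) ?_
      intro S hGS
      exact TabRule.ctr u hGS (XPar_image_inr _) (inr_not_mem_erase_image u Z)

lemma image_inr_irrel {i : DecidableEq (ℕ ⊕ ℕ)} (X : Finset ℕ) :
    @Finset.image _ _ i Sum.inr X = X.image Sum.inr := by
  ext b
  simp only [Finset.mem_image]

lemma mem_image_inr {i : DecidableEq (ℕ ⊕ ℕ)} {X : Finset ℕ} {s : ℕ ⊕ ℕ} :
    s ∈ @Finset.image _ _ i Sum.inr X ↔ ∃ u ∈ X, Sum.inr u = s :=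
  @Finset.mem_image ℕ (ℕ ⊕ ℕ) i Sum.inr X s

lemma kocc_subset_subst1 (x : ℕ) (a : ℕ) (A : Fm ℕ) :
    A.kocc ⊆ (A.subst1 x a).kocc := kocc_subset_msubst _ A

end Aux4
/-- the canonical model is a Mkrtychev model of `FOLP_CS`:
taking `D = Par`, `I(Q) = {(u₁,…,uₙ) | Q(u₁,…,uₙ) ∈ Γ}` and
`E(t) = {A | ¬t:_{Par(A)} A ∉ Γ}` yields an `FOLP_CS`-model, i.e. the
conditions E1–E6 all hold. -/
theorem canonical_model_is_model
    (CS : Set (ℕ × Fm Empty)) (hCS : ConstantSpec CS)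
    (Γ : Set (Fm ℕ)) (hclosed : ∀ F ∈ Γ, F.Closed)
    (hmax : MaximalCons CS Γ) (hE : EComplete Γ) :
    ∃ M : MModel CS ℕ, M.I = canI Γ ∧ M.E = canE Γ := by
  have koccA_toK : ∀ A : Fm Empty, (toK (K := ℕ) A).kocc = ∅ := by
    intro A
    unfold toK
    rw [Finset.eq_empty_iff_forall_notMem]
    intro b hb
    obtain ⟨a, _, _⟩ := mem_kocc_kmap.1 hb
    exact a.elim
  refine ⟨⟨⟨0⟩, canI Γ, canE Γ, ?_, ?_, ?_, ?_, ?_, ?_⟩, rfl, rfl⟩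
  -- E1
  · intro c A hcA
    simp only [canE, Set.mem_setOf_eq, koccA_toK, Finset.image_empty]
    intro hmem
    exact hmax.1 {Fm.neg (Fm.just (Tm.jconst c) ∅ (toK A))}
      (Set.singleton_subset_iff.2 hmem) (Set.finite_singleton _)
      (ClosedTableau.closeCS hcA rfl)
  -- E2
  · intro s t A B hsAB htA
    simp only [canE, Set.mem_setOf_eq] at hsAB htA ⊢
    intro hmem
    have hgrow : Fm.neg (Fm.just (Tm.app s t) ((A.kocc ∪ B.kocc).image Sum.inr) B) ∈ Γ :=
      grow hmax hclosed _ B hmem _ Finset.subset_union_right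
    have hbr := stepBr hmax hclosed hgrow
      (closed_negjust _ _ _) (closed_negjust _ _ _)
      (fun S hS => TabRule.fapp A hS (XPar_image_inr _)
        (fun u hu => Finset.mem_image_of_mem _ (Finset.mem_union_left _ hu)))
    rcases hbr with h | h
    · apply hsAB
      have hk : (A.imp B).kocc = A.kocc ∪ B.kocc := by
        ext b; simp only [Fm.kocc, Finset.mem_union]
      rwa [hk]
    · exact htA (shrink hmax hclosed t A _ Finset.subset_union_left h)
  -- E3
  · intro s t A hA
    simp only [canE, Set.mem_setOf_eq, Set.mem_union] at hA ⊢
    intro hmem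
    have h2 := step2 hmax hclosed hmem
      (closed_negjust _ _ _) (closed_negjust _ _ _)
      (fun S hS => TabRule.fplus hS (XPar_image_inr _))
    rcases hA with hA | hA
    · exact hA h2.1
    · exact hA h2.2
  -- E4
  · intro t A X hA hsubX
    simp only [canE, Set.mem_setOf_eq] at hA ⊢
    intro hmem
    have key : ∀ (Y : Finset (ℕ ⊕ ℕ)), XPar Y → (∀ b, Sum.inr b ∈ Y ↔ b ∈ X) →
        Fm.neg (Fm.just (Tm.bang t) ((Fm.just t Y A).kocc.image Sum.inr)
          (Fm.just t Y A)) ∈ Γ → False := by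
      intro Y hXPar hYX hmem
      have hky : (Fm.just t Y A).kocc.image Sum.inr = Y := by
        ext s
        simp only [Finset.mem_image, Fm.kocc, Finset.mem_union, mem_rpart]
        constructor
        · rintro ⟨b, hb | hb, rfl⟩
          · exact (hYX b).2 (hsubX hb)
          · exact hb
        · intro hs
          obtain ⟨u, rfl⟩ := hXPar s hs
          exact ⟨u, Or.inr hs, rfl⟩
      rw [hky] at hmem
      have h2 := step1 hmax hclosed hmem (closed_negjust' hXPar)
        (fun S hS => TabRule.fbang hS hXPar)
      have hYeq : Y = X.image Sum.inr := by
        ext s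
        constructor
        · intro hs
          obtain ⟨u, rfl⟩ := hXPar s hs
          exact Finset.mem_image_of_mem _ ((hYX u).1 hs)
        · intro hs
          obtain ⟨u, hu, rfl⟩ := Finset.mem_image.1 hs
          exact (hYX u).2 hu
      rw [hYeq] at h2
      exact hA (shrink hmax hclosed t A X hsubX h2)
    refine key _ ?_ ?_ hmem
    · intro s hs
      obtain ⟨u, _, rfl⟩ := mem_image_inr.1 hs
      exact ⟨u, rfl⟩
    · intro b
      constructor
      · intro hb
        obtain ⟨u, hu, hinj⟩ := mem_image_inr.1 hb
        cases Sum.inr_injective hinj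
        exact hu
      · exact fun hb => mem_image_inr.2 ⟨b, hb, rfl⟩
  -- E5
  · intro t x A hA
    simp only [canE, Set.mem_setOf_eq] at hA ⊢
    intro hmem
    have hk : (Fm.all x A).kocc = A.kocc := by simp [Fm.kocc]
    rw [hk] at hmem
    exact hA (step1 hmax hclosed hmem (closed_negjust _ _ _)
      (fun S hS => TabRule.genx hS (XPar_image_inr _)))
  -- E6
  · intro t A x a hA
    simp only [canE, Set.mem_setOf_eq] at hA ⊢
    intro hmem
    have h2 := step1 hmax hclosed hmem (closed_negjust _ _ _)
      (fun S hS => TabRule.ins x a hS (XPar_image_inr _))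
    exact hA (shrink hmax hclosed t A _ (kocc_subset_subst1 x a A) h2)
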